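/- Let θ > 0, p1 ∈ (0,1], 0 < t0 ≤ T, and let φ : [0,T] → [0,1] be absolutely continuous with φ(t) > 0 for all t ∈ [0,t0) and φ(t0) = 0. Then ∫_0^{t0} (φ'(t) − (θ/2)(p1 − φ(t)))² / φ(t) dt = +∞. -/

import Mathlib

open MeasureTheory
open scoped ENNReal NNReal

/-- Last crossing of level `ε` before `t₀`. -/
lemma wf_last_crossing (φ : ℝ → ℝ) (a t₀ ε : ℝ) (ha : a ≤ t₀)
    (hcont : ContinuousOn φ (Set.Icc a t₀)) (hε : 0 < ε) (hlt : ε < φ a)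
    (hzero : φ t₀ = 0) :
    ∃ s, a ≤ s ∧ s < t₀ ∧ φ s = ε ∧ ∀ u ∈ Set.Icc s t₀, φ u ≤ ε := by
  set K : Set ℝ := Set.Icc a t₀ ∩ φ ⁻¹' {ε} with hKdef
  have hKne : K.Nonempty := by
    have hmem : ε ∈ Set.Icc (φ t₀) (φ a) := ⟨by rw [hzero]; exact hε.le, hlt.le⟩
    obtain ⟨x, hx, hfx⟩ := intermediate_value_Icc' ha hcont hmem
    exact ⟨x, hx, by simpa using hfx⟩
  have hKclosed : IsClosed K :=
    hcont.preimage_isClosed_of_isClosed isClosed_Icc isClosed_singleton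
  have hKcomp : IsCompact K :=
    isCompact_Icc.of_isClosed_subset hKclosed Set.inter_subset_left
  have hsmem : sSup K ∈ K := hKcomp.sSup_mem hKne
  set s := sSup K with hsdef
  obtain ⟨⟨has, hst⟩, hφs'⟩ := hsmem
  have hφs : φ s = ε := hφs'
  have hslt : s < t₀ := lt_of_le_of_ne hst (by
    intro h; rw [h, hzero] at hφs; exact absurd hφs.symm hε.ne')
  refine ⟨s, has, hslt, hφs, ?_⟩
  intro u hu
  by_contra hgt
  push_neg at hgt
  have hu0 : a ≤ u := le_trans has hu.1
  have hmem : ε ∈ Set.Icc (φ t₀) (φ u) := ⟨by rw [hzero]; exact hε.le, hgt.le⟩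
  obtain ⟨v, hv, hfv⟩ :=
    intermediate_value_Icc' hu.2 (hcont.mono (Set.Icc_subset_Icc_left hu0)) hmem
  have hvK : v ∈ K := ⟨⟨le_trans hu0 hv.1, hv.2⟩, by simpa using hfv⟩
  have hvs : v ≤ s := le_csSup hKcomp.bddAbove hvK
  have hus : u = s := le_antisymm (hv.1.trans hvs) hu.1
  rw [hus, hφs] at hgt
  exact lt_irrefl _ hgt

/-- Each halving interval contributes at least `2c` to the action. -/
lemma wf_interval_bound (φ g B : ℝ → ℝ) (a b ε c : ℝ)
    (hab : a < b) (hε : 0 < ε) (hc : 0 < c)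
    (hgint : IntegrableOn g (Set.Ioc a b))
    (hφcont : ContinuousOn φ (Set.Icc a b))
    (hφpos : ∀ u ∈ Set.Ioc a b, 0 < φ u)
    (hφle : ∀ u ∈ Set.Icc a b, φ u ≤ ε)
    (hFTC : φ b - φ a = ∫ t in Set.Ioc a b, g t)
    (hφa : φ a = ε) (hφb : φ b = ε / 2)
    (hB : ∀ u ∈ Set.Icc a b, c ≤ B u)
    (hBcont : ContinuousOn B (Set.Icc a b)) :
    ENNReal.ofReal (2 * c) ≤ ∫⁻ t in Set.Ioc a b, ENNReal.ofReal ((g t - B t) ^ 2 / φ t) := by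
  set Δ : ℝ := b - a with hΔdef
  have hΔ : 0 < Δ := by simp [hΔdef]; linarith
  set A : ℝ := ε / 2 + c * Δ with hAdef
  have hA : 0 < A := by positivity
  set lam : ℝ := A / (ε * Δ) with hlamdef
  have hlam : 0 < lam := by positivity
  set I : ℝ≥0∞ := ∫⁻ t in Set.Ioc a b, ENNReal.ofReal ((g t - B t) ^ 2 / φ t) with hIdef
  clear_value Δ A lam I
  -- integrability facts
  have hBint : IntegrableOn B (Set.Ioc a b) :=
    (hBcont.integrableOn_Icc).mono_set Set.Ioc_subset_Icc_self
  have hfint : IntegrableOn (fun t => g t - B t) (Set.Ioc a b) := hgint.sub hBint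
  -- lower bound on ∫ B
  have hBlow : c * Δ ≤ ∫ t in Set.Ioc a b, B t := by
    have h1 : ∫ _t in Set.Ioc a b, c ≤ ∫ t in Set.Ioc a b, B t := by
      refine setIntegral_mono_on ?_ hBint measurableSet_Ioc
        (fun x hx => hB x (Set.Ioc_subset_Icc_self hx))
      exact integrableOn_const (by rw [Real.volume_Ioc]; exact ENNReal.ofReal_ne_top) enorm_ne_top
    have h2 : ∫ _t in Set.Ioc a b, c = Δ * c := by
      rw [hΔdef, setIntegral_const, measureReal_def, Real.volume_Ioc,
        ENNReal.toReal_ofReal (by linarith : (0:ℝ) ≤ b - a), smul_eq_mul]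
    rw [h2, mul_comm] at h1
    exact h1
  -- A ≤ ∫ |g - B|
  have hIf : ∫ t in Set.Ioc a b, (g t - B t) = -(ε / 2) - ∫ t in Set.Ioc a b, B t := by
    rw [integral_sub hgint hBint, ← hFTC, hφa, hφb]; ring
  have hAle : A ≤ ∫ t in Set.Ioc a b, |g t - B t| := by
    have h2 := norm_integral_le_integral_norm (μ := volume.restrict (Set.Ioc a b))
      (fun t => g t - B t)
    simp only [Real.norm_eq_abs] at h2
    have h3 : A ≤ -(∫ t in Set.Ioc a b, (g t - B t)) := by
      rw [hIf, hAdef]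
      generalize hJ : (∫ t in Set.Ioc a b, B t) = J at hBlow ⊢
      linarith [hBlow]
    calc A ≤ -(∫ t in Set.Ioc a b, (g t - B t)) := h3
      _ ≤ |∫ t in Set.Ioc a b, (g t - B t)| := neg_le_abs _
      _ ≤ ∫ t in Set.Ioc a b, |g t - B t| := h2
  -- measurability
  have hres : volume.restrict (Set.Ioc a b) ≤ volume.restrict (Set.Icc a b) :=
    Measure.restrict_mono Set.Ioc_subset_Icc_self le_rfl
  have hφm : AEMeasurable φ (volume.restrict (Set.Ioc a b)) :=
    (hφcont.aemeasurable measurableSet_Icc).mono_measure hres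
  have hBm : AEMeasurable B (volume.restrict (Set.Ioc a b)) :=
    (hBcont.aemeasurable measurableSet_Icc).mono_measure hres
  have hgm : AEMeasurable g (volume.restrict (Set.Ioc a b)) :=
    hgint.aestronglyMeasurable.aemeasurable
  have hQm : AEMeasurable (fun t => ENNReal.ofReal ((g t - B t) ^ 2 / φ t))
      (volume.restrict (Set.Ioc a b)) :=
    ENNReal.measurable_ofReal.comp_aemeasurable (((hgm.sub hBm).pow_const 2).div hφm)
  -- pointwise AM-GM
  have hpt : ∀ t ∈ Set.Ioc a b,
      ENNReal.ofReal (2 * lam * |g t - B t|) ≤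
        ENNReal.ofReal ((g t - B t) ^ 2 / φ t) + ENNReal.ofReal (lam ^ 2 * φ t) := by
    intro t ht
    have hφt : 0 < φ t := hφpos t ht
    have hre : 2 * lam * |g t - B t| ≤ (g t - B t) ^ 2 / φ t + lam ^ 2 * φ t := by
      rw [← sq_abs (g t - B t), div_add' _ _ _ hφt.ne', le_div_iff₀ hφt]
      nlinarith [sq_nonneg (|g t - B t| - lam * φ t), hφt]
    calc ENNReal.ofReal (2 * lam * |g t - B t|)
        ≤ ENNReal.ofReal ((g t - B t) ^ 2 / φ t + lam ^ 2 * φ t) :=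
          ENNReal.ofReal_le_ofReal hre
      _ = _ := ENNReal.ofReal_add (div_nonneg (sq_nonneg _) hφt.le) (by positivity)
  -- integrate the pointwise bound
  have hI1 : ∫⁻ t in Set.Ioc a b, ENNReal.ofReal (2 * lam * |g t - B t|) ≤
      I + ∫⁻ t in Set.Ioc a b, ENNReal.ofReal (lam ^ 2 * φ t) := by
    rw [hIdef, ← lintegral_add_left' hQm]
    exact lintegral_mono_ae ((ae_restrict_iff' measurableSet_Ioc).2
      (Filter.Eventually.of_forall hpt))
  have hI2 : ∫⁻ t in Set.Ioc a b, ENNReal.ofReal (lam ^ 2 * φ t) ≤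
      ENNReal.ofReal (lam ^ 2 * (ε * Δ)) := by
    calc ∫⁻ t in Set.Ioc a b, ENNReal.ofReal (lam ^ 2 * φ t)
        ≤ ∫⁻ _t in Set.Ioc a b, ENNReal.ofReal (lam ^ 2 * ε) := by
          refine lintegral_mono_ae ((ae_restrict_iff' measurableSet_Ioc).2
            (Filter.Eventually.of_forall fun t ht => ?_))
          exact ENNReal.ofReal_le_ofReal
            (mul_le_mul_of_nonneg_left (hφle t (Set.Ioc_subset_Icc_self ht)) (sq_nonneg lam))
      _ = ENNReal.ofReal (lam ^ 2 * ε) * volume (Set.Ioc a b) := by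
          rw [lintegral_const, Measure.restrict_apply_univ]
      _ = ENNReal.ofReal (lam ^ 2 * (ε * Δ)) := by
          rw [Real.volume_Ioc, ← ENNReal.ofReal_mul (by positivity)]
          rw [mul_assoc, hΔdef]
  have hL : ∫⁻ t in Set.Ioc a b, ENNReal.ofReal (2 * lam * |g t - B t|) =
      ENNReal.ofReal (2 * lam) * ∫⁻ t in Set.Ioc a b, ENNReal.ofReal |g t - B t| := by
    simp_rw [ENNReal.ofReal_mul (show (0:ℝ) ≤ 2 * lam by positivity)]
    exact lintegral_const_mul' _ _ ENNReal.ofReal_ne_top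
  -- main chain
  have hchain : ENNReal.ofReal (2 * lam * A) ≤ I + ENNReal.ofReal (lam ^ 2 * (ε * Δ)) := by
    calc ENNReal.ofReal (2 * lam * A)
        = ENNReal.ofReal (2 * lam) * ENNReal.ofReal A := ENNReal.ofReal_mul (by positivity)
      _ ≤ ENNReal.ofReal (2 * lam) * ∫⁻ t in Set.Ioc a b, ENNReal.ofReal |g t - B t| := by
          refine mul_le_mul_right ?_ _
          calc ENNReal.ofReal A
              ≤ ENNReal.ofReal (∫ t in Set.Ioc a b, |g t - B t|) :=
                ENNReal.ofReal_le_ofReal hAle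
            _ = ∫⁻ t in Set.Ioc a b, ENNReal.ofReal |g t - B t| :=
                ofReal_integral_eq_lintegral_ofReal hfint.abs
                  (Filter.Eventually.of_forall fun t => abs_nonneg _)
      _ = ∫⁻ t in Set.Ioc a b, ENNReal.ofReal (2 * lam * |g t - B t|) := hL.symm
      _ ≤ I + ∫⁻ t in Set.Ioc a b, ENNReal.ofReal (lam ^ 2 * φ t) := hI1
      _ ≤ I + ENNReal.ofReal (lam ^ 2 * (ε * Δ)) := add_le_add_right hI2 _
  by_cases hItop : I = ⊤
  · rw [hItop]; exact le_top
  · have hfin : I + ENNReal.ofReal (lam ^ 2 * (ε * Δ)) ≠ ⊤ := by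
      simp [ENNReal.add_eq_top, hItop]
    have htr := ENNReal.toReal_mono hfin hchain
    rw [ENNReal.toReal_add hItop ENNReal.ofReal_ne_top,
      ENNReal.toReal_ofReal (show (0:ℝ) ≤ 2 * lam * A by positivity),
      ENNReal.toReal_ofReal (show (0:ℝ) ≤ lam ^ 2 * (ε * Δ) by positivity)] at htr
    have hlA : lam * (ε * Δ) = A := by
      rw [hlamdef]
      exact div_mul_cancel₀ A (by positivity)
    have hsq : lam ^ 2 * (ε * Δ) = lam * A := by rw [pow_two, mul_assoc, hlA]
    have h5 : lam * A ≤ I.toReal := by rw [hsq] at htr; linarith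
    have h6 : 2 * c ≤ lam * A := by
      have hA2 : 2 * c * (ε * Δ) ≤ A * A := by
        rw [hAdef]; nlinarith [sq_nonneg (ε / 2 - c * Δ)]
      have h7 : lam * A = A * A / (ε * Δ) := by rw [hlamdef]; ring
      rw [h7, le_div_iff₀ (by positivity)]; linarith
    have h8 := ENNReal.ofReal_le_ofReal (h6.trans h5)
    rwa [ENNReal.ofReal_toReal hItop] at h8

/-- if `φ : [0,T] → [0,1]` is absolutely continuous (written here in the
equivalent form `φ t = φ 0 + ∫_0^t g`, with `g` integrable the a.e. derivative of `φ`),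
positive on `[0, t₀)` and `φ(t₀) = 0` with `0 < t₀ ≤ T`, then the Wright–Fisher action
`∫_0^{t₀} (φ'(t) - (θ/2)(p₁ - φ(t)))² / φ(t) dt` is infinite. -/
theorem action_infinite_of_hits_boundary
    (θ p₁ : ℝ) (hθ : 0 < θ) (hp₁ : p₁ ∈ Set.Ioc (0:ℝ) 1)
    (T t₀ : ℝ) (ht₀ : 0 < t₀) (ht₀T : t₀ ≤ T)
    (φ g : ℝ → ℝ)
    (hrange : ∀ t ∈ Set.Icc (0:ℝ) T, φ t ∈ Set.Icc (0:ℝ) 1)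
    (hgint : IntegrableOn g (Set.Icc (0:ℝ) T))
    (hAC : ∀ t ∈ Set.Icc (0:ℝ) T, φ t = φ 0 + ∫ s in (0:ℝ)..t, g s)
    (hpos : ∀ t ∈ Set.Ico (0:ℝ) t₀, 0 < φ t)
    (hzero : φ t₀ = 0) :
    ∫⁻ t in Set.Icc (0:ℝ) t₀,
      ENNReal.ofReal ((g t - θ / 2 * (p₁ - φ t)) ^ 2 / φ t) = ⊤ := by
  have hp1 : 0 < p₁ := hp₁.1
  set c : ℝ := θ * p₁ / 4 with hcdef
  have hc : 0 < c := by positivity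
  have hφ0 : 0 < φ 0 := hpos 0 ⟨le_refl 0, ht₀⟩
  set ε₀ : ℝ := min (φ 0 / 2) (p₁ / 2) with hε₀def
  have hε₀pos : 0 < ε₀ := lt_min (by linarith) (by linarith)
  have hε₀lt : ε₀ < φ 0 := lt_of_le_of_lt (min_le_left _ _) (by linarith)
  have hε₀p : ε₀ ≤ p₁ / 2 := min_le_right _ _
  -- continuity of φ on [0,T]
  have hgprim : ContinuousOn (fun x => ∫ t in Set.Ioc (0:ℝ) x, g t) (Set.Icc (0:ℝ) T) :=
    intervalIntegral.continuousOn_primitive hgint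
  have hφcont : ContinuousOn φ (Set.Icc (0:ℝ) T) := by
    have hsum : ContinuousOn (fun x => φ 0 + ∫ t in Set.Ioc (0:ℝ) x, g t) (Set.Icc (0:ℝ) T) :=
      continuousOn_const.add hgprim
    refine hsum.congr fun t ht => ?_
    rw [hAC t ht, intervalIntegral.integral_of_le ht.1]
  -- FTC on subintervals
  have hFTC : ∀ a b : ℝ, 0 ≤ a → a ≤ b → b ≤ T →
      φ b - φ a = ∫ t in Set.Ioc a b, g t := by
    intro a b ha hab hbT
    have hia : IntervalIntegrable g volume 0 a :=
      (hgint.mono_set (by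
        rw [Set.uIcc_of_le ha]
        exact Set.Icc_subset_Icc le_rfl (hab.trans hbT))).intervalIntegrable
    have hib : IntervalIntegrable g volume 0 b :=
      (hgint.mono_set (by
        rw [Set.uIcc_of_le (ha.trans hab)]
        exact Set.Icc_subset_Icc le_rfl hbT)).intervalIntegrable
    calc φ b - φ a = (∫ s in (0:ℝ)..b, g s) - ∫ s in (0:ℝ)..a, g s := by
          rw [hAC b ⟨ha.trans hab, hbT⟩, hAC a ⟨ha, hab.trans hbT⟩]; ring
      _ = ∫ s in a..b, g s := intervalIntegral.integral_interval_sub_left hib hia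
      _ = ∫ t in Set.Ioc a b, g t := intervalIntegral.integral_of_le hab
  -- halving sequence
  obtain ⟨S, hS, hSmono⟩ : ∃ S : ℕ → ℝ,
      (∀ k, 0 ≤ S k ∧ S k < t₀ ∧ φ (S k) = ε₀ / 2 ^ k ∧
        ∀ u ∈ Set.Icc (S k) t₀, φ u ≤ ε₀ / 2 ^ k) ∧ ∀ k, S k ≤ S (k + 1) := by
    obtain ⟨s0, hs00, hs0t, hφs0, hs0le⟩ :=
      wf_last_crossing φ 0 t₀ ε₀ ht₀.le
        (hφcont.mono (Set.Icc_subset_Icc le_rfl ht₀T)) hε₀pos hε₀lt hzero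
    have hbase : 0 ≤ s0 ∧ s0 < t₀ ∧ φ s0 = ε₀ / 2 ^ 0 ∧
        ∀ u ∈ Set.Icc s0 t₀, φ u ≤ ε₀ / 2 ^ 0 := by
      refine ⟨hs00, hs0t, by simpa using hφs0, fun u hu => by simpa using hs0le u hu⟩
    have hstep : ∀ (k : ℕ) (x : ℝ),
        (0 ≤ x ∧ x < t₀ ∧ φ x = ε₀ / 2 ^ k ∧ ∀ u ∈ Set.Icc x t₀, φ u ≤ ε₀ / 2 ^ k) →
        ∃ y, x ≤ y ∧ (0 ≤ y ∧ y < t₀ ∧ φ y = ε₀ / 2 ^ (k + 1) ∧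
          ∀ u ∈ Set.Icc y t₀, φ u ≤ ε₀ / 2 ^ (k + 1)) := by
      rintro k x ⟨hx0, hxt, hφx, -⟩
      have hlt : ε₀ / 2 ^ (k + 1) < φ x := by
        rw [hφx]
        exact div_lt_div_of_pos_left hε₀pos (by positivity)
          (by exact pow_lt_pow_right₀ (by norm_num) (Nat.lt_succ_self k))
      obtain ⟨s, hxs, hst, hφs, hsle⟩ :=
        wf_last_crossing φ x t₀ (ε₀ / 2 ^ (k + 1)) hxt.le
          (hφcont.mono (Set.Icc_subset_Icc hx0 ht₀T)) (by positivity) hlt hzero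
      exact ⟨s, hxs, hx0.trans hxs, hst, hφs, hsle⟩
    choose nxt hle hP using hstep
    let F : ∀ k : ℕ, {x : ℝ // 0 ≤ x ∧ x < t₀ ∧ φ x = ε₀ / 2 ^ k ∧
        ∀ u ∈ Set.Icc x t₀, φ u ≤ ε₀ / 2 ^ k} := fun k =>
      Nat.rec (motive := fun k => {x : ℝ // 0 ≤ x ∧ x < t₀ ∧ φ x = ε₀ / 2 ^ k ∧
          ∀ u ∈ Set.Icc x t₀, φ u ≤ ε₀ / 2 ^ k})
        ⟨s0, hbase⟩ (fun k ih => ⟨nxt k ih.1 ih.2, hP k ih.1 ih.2⟩) k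
    exact ⟨fun k => (F k).1, fun k => (F k).2, fun k => hle k (F k).1 (F k).2⟩
  have hmono : Monotone S := monotone_nat_of_le_succ hSmono
  -- per-interval bound
  have hkey : ∀ k : ℕ, ENNReal.ofReal (2 * c) ≤
      ∫⁻ t in Set.Ioc (S k) (S (k + 1)),
        ENNReal.ofReal ((g t - θ / 2 * (p₁ - φ t)) ^ 2 / φ t) := by
    intro k
    obtain ⟨hk0, hkt, hφk, hkle⟩ := hS k
    obtain ⟨hk0', hkt', hφk', hkle'⟩ := hS (k + 1)
    have hhalf : ε₀ / 2 ^ (k + 1) < ε₀ / 2 ^ k :=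
      div_lt_div_of_pos_left hε₀pos (by positivity)
        (pow_lt_pow_right₀ (by norm_num) (Nat.lt_succ_self k))
    have hlt : S k < S (k + 1) := by
      refine lt_of_le_of_ne (hSmono k) fun h => ?_
      rw [h, hφk'] at hφk
      linarith
    have hsub : Set.Icc (S k) (S (k + 1)) ⊆ Set.Icc (0:ℝ) T :=
      Set.Icc_subset_Icc hk0 (hkt'.le.trans ht₀T)
    have hb := wf_interval_bound φ g (fun u => θ / 2 * (p₁ - φ u)) (S k) (S (k + 1))
      (ε₀ / 2 ^ k) c hlt (by positivity) hc
      (hgint.mono_set fun x hx => ⟨hk0.trans hx.1.le, hx.2.trans (hkt'.le.trans ht₀T)⟩)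
      (hφcont.mono hsub)
      (fun u hu => hpos u ⟨hk0.trans hu.1.le, lt_of_le_of_lt hu.2 hkt'⟩)
      (fun u hu => hkle u ⟨hu.1, hu.2.trans hkt'.le⟩)
      (hFTC (S k) (S (k + 1)) hk0 (hSmono k) (hkt'.le.trans ht₀T))
      hφk (by rw [hφk', pow_succ]; ring)
      (fun u hu => by
        have h1 : φ u ≤ p₁ / 2 := by
          have h2 : φ u ≤ ε₀ / 2 ^ k := hkle u ⟨hu.1, hu.2.trans hkt'.le⟩
          have h3 : ε₀ / 2 ^ k ≤ ε₀ := div_le_self hε₀pos.le (one_le_pow₀ (by norm_num))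
          linarith
        rw [hcdef]
        nlinarith [hθ.le])
      (continuousOn_const.mul (continuousOn_const.sub (hφcont.mono hsub)))
    simpa using hb
  -- sum the contributions
  have hsum : ∀ n : ℕ, (n : ℝ≥0∞) * ENNReal.ofReal (2 * c) ≤
      ∫⁻ t in Set.Ioc (S 0) (S n),
        ENNReal.ofReal ((g t - θ / 2 * (p₁ - φ t)) ^ 2 / φ t) := by
    intro n
    induction n with
    | zero => simp
    | succ n ih =>
      have h1 : S 0 ≤ S n := hmono (Nat.zero_le n)
      have h2 : S n ≤ S (n + 1) := hSmono n
      rw [← Set.Ioc_union_Ioc_eq_Ioc h1 h2,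
        lintegral_union measurableSet_Ioc (Set.Ioc_disjoint_Ioc_of_le le_rfl)]
      push_cast
      rw [add_mul, one_mul]
      exact add_le_add ih (hkey n)
  have htot : ∀ n : ℕ, (n : ℝ≥0∞) * ENNReal.ofReal (2 * c) ≤
      ∫⁻ t in Set.Icc (0:ℝ) t₀,
        ENNReal.ofReal ((g t - θ / 2 * (p₁ - φ t)) ^ 2 / φ t) := by
    intro n
    refine (hsum n).trans (lintegral_mono_set fun x hx => ?_)
    exact ⟨(hS 0).1.trans hx.1.le, hx.2.trans (hS n).2.1.le⟩
  by_contra hX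
  have hd0 : ENNReal.ofReal (2 * c) ≠ 0 := (ENNReal.ofReal_pos.2 (by positivity)).ne'
  obtain ⟨n, hn⟩ := ENNReal.exists_nat_gt
    (ENNReal.div_lt_top hX hd0).ne
  have hlt : ∫⁻ t in Set.Icc (0:ℝ) t₀,
      ENNReal.ofReal ((g t - θ / 2 * (p₁ - φ t)) ^ 2 / φ t) <
      (n : ℝ≥0∞) * ENNReal.ofReal (2 * c) :=
    (ENNReal.div_lt_iff (Or.inl hd0) (Or.inl ENNReal.ofReal_ne_top)).1 hn
  exact absurd (htot n) (not_le.2 hlt)
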